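/- Let ρ ≥ 1 be a real number. There exists a constant C > 0 such that for every x ∈ ℝ² with ‖x‖ ≥ 2, ∫_{{y : ‖x−y‖ ≤ ‖x‖/2}} ‖x−y‖^{−1}·‖y‖^{−2(ρ+1)} dy ≤ C·‖x‖^{−(2ρ+1)}. -/

import Mathlib

open MeasureTheory

abbrev E2 := EuclideanSpace ℝ (Fin 2)

theorem stmt17 (ρ : ℝ) (hρ : 1 ≤ ρ) :
    ∃ C : ℝ, 0 < C ∧ ∀ x : E2, 2 ≤ ‖x‖ →
      ∫⁻ y in {y : E2 | ‖x - y‖ ≤ ‖x‖ / 2},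
          ENNReal.ofReal (‖x - y‖⁻¹ * ‖y‖ ^ (-(2 * (ρ + 1))))
        ≤ ENNReal.ofReal (C * ‖x‖ ^ (-(2 * ρ + 1))) := by
  set c : ℝ := (volume (Metric.ball (0:E2) 1)).toReal with hcdef
  have hc0 : 0 < c :=
    ENNReal.toReal_pos (Metric.measure_ball_pos volume (0:E2) one_pos).ne' measure_ball_lt_top.ne
  have hcvol : volume (Metric.ball (0:E2) 1) = ENNReal.ofReal c := by
    rw [hcdef, ENNReal.ofReal_toReal measure_ball_lt_top.ne]
  refine ⟨4 * 2 ^ (2*ρ+1) * c, by positivity, ?_⟩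
  intro x hx
  set R : ℝ := ‖x‖ / 2 with hRdef
  have hR : 0 < R := by rw [hRdef]; linarith
  set p : ℝ := -(2 * (ρ + 1)) with hpdef
  have hp : p ≤ 0 := by rw [hpdef]; linarith
  set S : Set E2 := {y : E2 | ‖x - y‖ ≤ R} with hSdef
  have hSmeas : MeasurableSet S := by
    have : S = (fun y : E2 => ‖x - y‖) ⁻¹' Set.Iic R := rfl
    rw [this]
    exact ((continuous_const.sub continuous_id).norm).measurable measurableSet_Iic
  -- pointwise bound on S
  have hmono : ∀ y ∈ S, ENNReal.ofReal (‖x - y‖⁻¹ * ‖y‖ ^ p)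
      ≤ ENNReal.ofReal (R ^ p) * ENNReal.ofReal ‖x - y‖⁻¹ := by
    intro y hy
    rw [← ENNReal.ofReal_mul (Real.rpow_nonneg hR.le p)]
    apply ENNReal.ofReal_le_ofReal
    rw [mul_comm]
    have hRy : R ≤ ‖y‖ := by
      have h1 := norm_sub_norm_le x y
      have h2 : ‖x - y‖ ≤ R := hy
      rw [hRdef] at *
      linarith
    exact mul_le_mul_of_nonneg_right (Real.rpow_le_rpow_of_nonpos hR hRy hp)
      (inv_nonneg.2 (norm_nonneg _))
  -- key bound on the convolution kernel
  have key : ∫⁻ y in S, ENNReal.ofReal ‖x - y‖⁻¹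
      ≤ ENNReal.ofReal (4 * R) * ENNReal.ofReal c := by
    set A : ℕ → Set E2 := fun k => {y : E2 | ‖x - y‖ ∈ Set.Ioc (R / 2 ^ (k+1)) (R / 2 ^ k)}
      with hAdef
    have hAmeas : ∀ k, MeasurableSet (A k) := by
      intro k
      exact ((continuous_const.sub continuous_id).norm).measurable measurableSet_Ioc
    have hover : S ⊆ {x} ∪ ⋃ k, A k := by
      intro y hy
      rcases eq_or_lt_of_le (norm_nonneg (x - y)) with h0 | h0
      · left
        have hxy : x = y := sub_eq_zero.1 (norm_eq_zero.1 h0.symm)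
        simp [hxy]
      · right
        have hd : ‖x - y‖ ≤ R := hy
        have hex : ∃ n : ℕ, R / 2 ^ n < ‖x - y‖ := by
          obtain ⟨n, hn⟩ := pow_unbounded_of_one_lt (R / ‖x - y‖) (one_lt_two (α := ℝ))
          have hn' : R < 2 ^ n * ‖x - y‖ := (div_lt_iff₀ h0).1 hn
          exact ⟨n, by rw [div_lt_iff₀ (by positivity)]; linarith⟩
        classical
        set N := Nat.find hex with hN
        have hNspec : R / 2 ^ N < ‖x - y‖ := Nat.find_spec hex
        have hN0 : N ≠ 0 := by
          intro h
          rw [h] at hNspec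
          simp at hNspec
          linarith
        obtain ⟨k, hk⟩ := Nat.exists_eq_succ_of_ne_zero hN0
        have hkk : ¬ (R / 2 ^ k < ‖x - y‖) := Nat.find_min hex (by omega)
        refine Set.mem_iUnion.2 ⟨k, ?_⟩
        refine ⟨?_, not_lt.1 hkk⟩
        have : k + 1 = N := by omega
        rw [this]
        exact hNspec
    have hterm : ∀ k : ℕ, ∫⁻ y in A k, ENNReal.ofReal ‖x - y‖⁻¹
        ≤ ENNReal.ofReal (2 * R) * ENNReal.ofReal c * (ENNReal.ofReal 2⁻¹) ^ k := by
      intro k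
      have hbound : ∀ y ∈ A k, ENNReal.ofReal ‖x - y‖⁻¹
          ≤ ENNReal.ofReal ((R / 2 ^ (k+1))⁻¹) := by
        intro y hy
        exact ENNReal.ofReal_le_ofReal
          (inv_anti₀ (by positivity) hy.1.le)
      calc ∫⁻ y in A k, ENNReal.ofReal ‖x - y‖⁻¹
          ≤ ∫⁻ _ in A k, ENNReal.ofReal ((R / 2 ^ (k+1))⁻¹) :=
            setLIntegral_mono' (hAmeas k) hbound
        _ = ENNReal.ofReal ((R / 2 ^ (k+1))⁻¹) * volume (A k) := setLIntegral_const _ _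
        _ ≤ ENNReal.ofReal ((R / 2 ^ (k+1))⁻¹) *
              (ENNReal.ofReal ((R / 2 ^ k) ^ 2) * ENNReal.ofReal c) := by
            gcongr
            have hsub : A k ⊆ Metric.closedBall x (R / 2 ^ k) := by
              intro y hy
              rw [Metric.mem_closedBall, dist_comm, dist_eq_norm]
              exact hy.2
            calc volume (A k) ≤ volume (Metric.closedBall x (R / 2 ^ k)) :=
                  measure_mono hsub
              _ = ENNReal.ofReal ((R / 2 ^ k) ^ Module.finrank ℝ E2) *
                    volume (Metric.ball (0:E2) 1) :=
                  Measure.addHaar_closedBall volume x (by positivity)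
              _ = ENNReal.ofReal ((R / 2 ^ k) ^ 2) * ENNReal.ofReal c := by
                  rw [hcvol]; norm_num [finrank_euclideanSpace]
        _ = ENNReal.ofReal (2 * R) * ENNReal.ofReal c * (ENNReal.ofReal 2⁻¹) ^ k := by
            have hreal : (R / 2 ^ (k+1))⁻¹ * ((R / 2 ^ k) ^ 2 * c)
                = 2 * R * c * ((2:ℝ)⁻¹) ^ k := by
              field_simp
              rw [one_div, inv_pow, eq_mul_inv_iff_mul_eq₀ (pow_ne_zero k (two_ne_zero : (2:ℝ) ≠ 0))]
              ring
            rw [← ENNReal.ofReal_mul (by positivity), ← ENNReal.ofReal_mul (by positivity),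
              hreal, ENNReal.ofReal_mul (by positivity), ENNReal.ofReal_mul (by positivity),
              ENNReal.ofReal_pow (by norm_num)]
    calc ∫⁻ y in S, ENNReal.ofReal ‖x - y‖⁻¹
        ≤ ∫⁻ y in {x} ∪ ⋃ k, A k, ENNReal.ofReal ‖x - y‖⁻¹ := lintegral_mono_set hover
      _ ≤ (∫⁻ y in {x}, ENNReal.ofReal ‖x - y‖⁻¹) +
            ∫⁻ y in ⋃ k, A k, ENNReal.ofReal ‖x - y‖⁻¹ := lintegral_union_le _ _ _
      _ ≤ 0 + ∑' k, ∫⁻ y in A k, ENNReal.ofReal ‖x - y‖⁻¹ := by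
          gcongr
          · exact le_of_eq (setLIntegral_measure_zero _ _ (measure_singleton x))
          · exact lintegral_iUnion_le _ _
      _ ≤ 0 + ∑' k : ℕ, ENNReal.ofReal (2 * R) * ENNReal.ofReal c * (ENNReal.ofReal 2⁻¹) ^ k := by
          gcongr with k
          exact hterm k
      _ = ENNReal.ofReal (2 * R) * ENNReal.ofReal c * (1 - ENNReal.ofReal 2⁻¹)⁻¹ := by
          rw [zero_add, ENNReal.tsum_mul_left, ENNReal.tsum_geometric]
      _ = ENNReal.ofReal (4 * R) * ENNReal.ofReal c := by
          have h2 : ENNReal.ofReal (2:ℝ)⁻¹ = 2⁻¹ := by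
            rw [ENNReal.ofReal_inv_of_pos two_pos]; norm_num
          rw [h2, ENNReal.one_sub_inv_two, inv_inv, mul_right_comm]
          congr 1
          rw [← ENNReal.ofReal_ofNat 2, ← ENNReal.ofReal_mul (by positivity)]
          congr 1
          ring
  -- assemble
  calc ∫⁻ y in S, ENNReal.ofReal (‖x - y‖⁻¹ * ‖y‖ ^ p)
      ≤ ∫⁻ y in S, ENNReal.ofReal (R ^ p) * ENNReal.ofReal ‖x - y‖⁻¹ :=
        setLIntegral_mono' hSmeas hmono
    _ = ENNReal.ofReal (R ^ p) * ∫⁻ y in S, ENNReal.ofReal ‖x - y‖⁻¹ :=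
        lintegral_const_mul' _ _ ENNReal.ofReal_ne_top
    _ ≤ ENNReal.ofReal (R ^ p) * (ENNReal.ofReal (4 * R) * ENNReal.ofReal c) := by gcongr
    _ = ENNReal.ofReal (R ^ p * (4 * R * c)) := by
        rw [← ENNReal.ofReal_mul (by positivity), ← ENNReal.ofReal_mul (Real.rpow_nonneg hR.le p)]
    _ ≤ ENNReal.ofReal (4 * 2 ^ (2*ρ+1) * c * ‖x‖ ^ (-(2 * ρ + 1))) := by
        apply ENNReal.ofReal_le_ofReal
        have hx0 : (0:ℝ) < ‖x‖ := by linarith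
        have h1 : R ^ p * R = R ^ (-(2*ρ+1)) := by
          nth_rewrite 2 [← Real.rpow_one R]
          rw [← Real.rpow_add hR]
          congr 1
          rw [hpdef]; ring
        have h2 : R ^ (-(2*ρ+1)) = 2 ^ (2*ρ+1) * ‖x‖ ^ (-(2*ρ+1)) := by
          rw [hRdef, Real.div_rpow (norm_nonneg x) (by norm_num),
            Real.rpow_neg (norm_nonneg x), Real.rpow_neg (by norm_num : (0:ℝ) ≤ 2)]
          field_simp
        refine le_of_eq ?_
        calc R ^ p * (4 * R * c) = 4 * c * (R ^ p * R) := by ring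
          _ = 4 * c * (2 ^ (2*ρ+1) * ‖x‖ ^ (-(2*ρ+1))) := by rw [h1, h2]
          _ = 4 * 2 ^ (2*ρ+1) * c * ‖x‖ ^ (-(2*ρ+1)) := by ring
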